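/- Let d ≥ 2, γ ∈ (0,1), let E be a measurable subset of ℝ^{d-1} with finite diameter, and let K : E × E → ℝ be measurable with |K(x,y)| ≤ A/|x-y|^{d-1-γ} for all x ≠ y in E, and |K(x₁,y) - K(x₂,y)| ≤ |x₁-x₂| · A/|x₁-y|^{d-γ} whenever |x₁-x₂| ≤ |x₁-y|/2. Then there is a constant C depending only on d and γ such that for every bounded measurable f : E → ℝ the function g(x) = ∫_E K(x,y) f(y) dy satisfies ‖g‖_{∞,E} ≤ C A diam(E)^γ ‖f‖_{∞,E} and ‖g‖_{γ,E} ≤ C A ‖f‖_{∞,E}. -/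

import Mathlib

open MeasureTheory Metric Set
open scoped RealInnerProductSpace

noncomputable def sphereVol (d : ℕ) : ℝ :=
  d * (volume (Metric.ball (0 : EuclideanSpace ℝ (Fin d)) 1)).toReal

noncomputable def gradN (d : ℕ) (y : EuclideanSpace ℝ (Fin d)) : EuclideanSpace ℝ (Fin d) :=
  (sphereVol d * ‖y‖ ^ d)⁻¹ • y

noncomputable def hessN (d : ℕ) (z w : EuclideanSpace ℝ (Fin d)) : EuclideanSpace ℝ (Fin d) :=
  (sphereVol d)⁻¹ • ((‖z‖ ^ d)⁻¹ • w - ((d : ℝ) * (‖z‖ ^ (d + 2))⁻¹ * ⟪z, w⟫) • z)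

/-- `Φ` is a defining function of class `C^{1+γ}` for the set `D`. -/
def IsDefining (d : ℕ) (γ : ℝ) (D : Set (EuclideanSpace ℝ (Fin d)))
    (Φ : EuclideanSpace ℝ (Fin d) → ℝ) : Prop :=
  ContDiff ℝ 1 Φ ∧
  (∃ K : ℝ, ∀ x y, ‖gradient Φ x - gradient Φ y‖ ≤ K * ‖x - y‖ ^ γ) ∧
  D = {x | Φ x < 0} ∧
  frontier D = {x | Φ x = 0} ∧
  ∀ x ∈ frontier D, gradient Φ x ≠ 0

/-- `D` is a bounded domain of class `C^{1+γ}`. -/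
def IsC1Domain (d : ℕ) (γ : ℝ) (D : Set (EuclideanSpace ℝ (Fin d))) : Prop :=
  IsOpen D ∧ Bornology.IsBounded D ∧ ∃ Φ, IsDefining d γ D Φ

open MeasureTheory Metric Set MeasureTheory.Measure
open scoped ENNReal

variable {E : Type*} [NormedAddCommGroup E] [NormedSpace ℝ E] [MeasurableSpace E]
  [BorelSpace E] [FiniteDimensional ℝ E] [Nontrivial E] (μ : Measure E) [μ.IsAddHaarMeasure]

lemma my_lintegral_fun_norm_addHaar (g : ℝ → ℝ≥0∞) (hg : Measurable g) :
    ∫⁻ x, g ‖x‖ ∂μ = (Module.finrank ℝ E) * μ (ball 0 1) *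
      ∫⁻ r in Ioi (0:ℝ), ENNReal.ofReal (r ^ (Module.finrank ℝ E - 1)) * g r := by
  calc
    ∫⁻ x, g ‖x‖ ∂μ = ∫⁻ x : ({(0:E)}ᶜ : Set E), g ‖x.1‖ ∂(μ.comap (↑)) := by
      rw [lintegral_subtype_comap (measurableSet_singleton _).compl fun x ↦ g ‖x‖,
        restrict_compl_singleton]
    _ = ∫⁻ p : sphere (0:E) 1 × Ioi (0:ℝ), g p.2
          ∂(μ.toSphere.prod (volumeIoiPow (Module.finrank ℝ E - 1))) := by
      rw [← μ.measurePreserving_homeomorphUnitSphereProd.lintegral_comp_emb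
        (Homeomorph.measurableEmbedding _) (fun p ↦ g p.2)]
      simp
    _ = μ.toSphere univ * ∫⁻ r : Ioi (0:ℝ), g r ∂(volumeIoiPow (Module.finrank ℝ E - 1)) := by
      rw [lintegral_prod (fun p : ↑(sphere (0:E) 1) × ↑(Ioi (0:ℝ)) ↦ g ↑p.2) ((hg.comp measurable_subtype_coe).comp measurable_snd).aemeasurable]
      simp [lintegral_const, mul_comm]
    _ = _ := by
      rw [Measure.toSphere_apply_univ, Measure.volumeIoiPow,
        lintegral_withDensity_eq_lintegral_mul (f := fun r : Ioi (0:ℝ) ↦ ENNReal.ofReal (r.1 ^ (Module.finrank ℝ E - 1)))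
          _ ((measurable_subtype_coe.pow_const _).ennreal_ofReal)
          (g := fun r : Ioi (0:ℝ) ↦ g ↑r) (hg.comp measurable_subtype_coe),
        show (∫⁻ (a : ↑(Ioi (0:ℝ))), ((fun r : Ioi (0:ℝ) => ENNReal.ofReal (↑r ^ (Module.finrank ℝ E - 1))) * fun r : Ioi (0:ℝ) => g ↑r) a ∂comap Subtype.val volume)
          = _ from lintegral_subtype_comap measurableSet_Ioi
          (fun r ↦ ENNReal.ofReal (r ^ (Module.finrank ℝ E - 1)) * g r)]


local notation "V" n => EuclideanSpace ℝ (Fin n)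

lemma lint_ball_rpow (n : ℕ) (hn : 1 ≤ n) (t : ℝ) (ht : -1 < (n:ℝ) - 1 + t)
    (x : V n) (R : ℝ) (hR : 0 < R) :
    ∫⁻ y in ball x R, ENNReal.ofReal (‖y - x‖ ^ t) =
      (n : ℝ≥0∞) * volume (ball (0 : V n) 1) *
        ENNReal.ofReal (R ^ ((n:ℝ) + t) / ((n:ℝ) + t)) := by
  haveI : Nonempty (Fin n) := ⟨⟨0, hn⟩⟩
  have hfin : Module.finrank ℝ (V n) = n := finrank_euclideanSpace_fin
  set s : ℝ := (n:ℝ) - 1 + t with hs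
  set g : ℝ → ℝ≥0∞ := fun r ↦ (Iio R).indicator (fun r ↦ ENNReal.ofReal (r ^ t)) r with hg
  have hgm : Measurable g :=
    ((by fun_prop : Measurable fun r : ℝ ↦ ENNReal.ofReal (r ^ t))).indicator measurableSet_Iio
  have h1 : ∫⁻ y in ball x R, ENNReal.ofReal (‖y - x‖ ^ t) = ∫⁻ y : V n, g ‖y‖ := by
    rw [← lintegral_indicator measurableSet_ball _,
      ← lintegral_add_right_eq_self
        (fun y ↦ (ball x R).indicator (fun y ↦ ENNReal.ofReal (‖y - x‖ ^ t)) y) x]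
    refine lintegral_congr fun y ↦ ?_
    simp [hg, indicator, mem_ball, dist_eq_norm, add_sub_cancel_right]
  rw [h1, my_lintegral_fun_norm_addHaar _ g hgm, hfin]
  congr 1
  have h2 : ∀ r ∈ Ioo (0:ℝ) R,
      ENNReal.ofReal (r ^ (n - 1)) * ENNReal.ofReal (r ^ t) = ENNReal.ofReal (r ^ s) := by
    intro r hr
    rw [← ENNReal.ofReal_mul (pow_nonneg hr.1.le _)]
    congr 1
    rw [← Real.rpow_natCast r (n-1), ← Real.rpow_add hr.1]
    congr 1
    push_cast [hn]
    ring
  calc ∫⁻ r in Ioi (0:ℝ), ENNReal.ofReal (r ^ (n - 1)) * g r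
      = ∫⁻ r in Ioi (0:ℝ), (Iio R).indicator
          (fun r ↦ ENNReal.ofReal (r ^ (n-1)) * ENNReal.ofReal (r ^ t)) r := by
        refine lintegral_congr fun r ↦ ?_
        simp [hg, indicator]
    _ = ∫⁻ r in Ioo (0:ℝ) R, ENNReal.ofReal (r ^ (n-1)) * ENNReal.ofReal (r ^ t) := by
        rw [lintegral_indicator measurableSet_Iio _, Measure.restrict_restrict measurableSet_Iio,
          Set.inter_comm, Set.Ioi_inter_Iio]
    _ = ∫⁻ r in Ioo (0:ℝ) R, ENNReal.ofReal (r ^ s) :=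
        setLIntegral_congr_fun measurableSet_Ioo h2
    _ = ENNReal.ofReal (R ^ ((n:ℝ) + t) / ((n:ℝ) + t)) := by
        have hint : IntegrableOn (fun r : ℝ ↦ r ^ s) (Ioo 0 R) :=
          ((intervalIntegral.intervalIntegrable_rpow' ht (a := 0) (b := R)).1).mono_set Ioo_subset_Ioc_self
        have hnn : 0 ≤ᵐ[volume.restrict (Ioo (0:ℝ) R)] fun r : ℝ ↦ r ^ s :=
          (ae_restrict_iff' measurableSet_Ioo).2
            (Filter.Eventually.of_forall fun r hr ↦ Real.rpow_nonneg hr.1.le s)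
        rw [← ofReal_integral_eq_lintegral_ofReal hint hnn]
        congr 1
        rw [restrict_congr_set Ioo_ae_eq_Ioc, ← intervalIntegral.integral_of_le hR.le,
          integral_rpow (Or.inl ht), Real.zero_rpow (by linarith : s + 1 ≠ 0)]
        rw [show s + 1 = (n:ℝ) + t by rw [hs]; ring]
        ring

lemma lint_compl_ball_rpow (n : ℕ) (hn : 1 ≤ n) (t : ℝ) (ht : (n:ℝ) - 1 + t < -1)
    (x : V n) (ρ : ℝ) (hρ : 0 < ρ) :
    ∫⁻ y in (ball x ρ)ᶜ, ENNReal.ofReal (‖y - x‖ ^ t) =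
      (n : ℝ≥0∞) * volume (ball (0 : V n) 1) *
        ENNReal.ofReal (-(ρ ^ ((n:ℝ) + t)) / ((n:ℝ) + t)) := by
  haveI : Nonempty (Fin n) := ⟨⟨0, hn⟩⟩
  have hfin : Module.finrank ℝ (V n) = n := finrank_euclideanSpace_fin
  set s : ℝ := (n:ℝ) - 1 + t with hs
  set g : ℝ → ℝ≥0∞ := fun r ↦ (Ici ρ).indicator (fun r ↦ ENNReal.ofReal (r ^ t)) r with hg
  have hgm : Measurable g :=
    ((by fun_prop : Measurable fun r : ℝ ↦ ENNReal.ofReal (r ^ t))).indicator measurableSet_Ici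
  have h1 : ∫⁻ y in (ball x ρ)ᶜ, ENNReal.ofReal (‖y - x‖ ^ t) = ∫⁻ y : V n, g ‖y‖ := by
    rw [← lintegral_indicator measurableSet_ball.compl _,
      ← lintegral_add_right_eq_self
        (fun y ↦ (ball x ρ)ᶜ.indicator (fun y ↦ ENNReal.ofReal (‖y - x‖ ^ t)) y) x]
    refine lintegral_congr fun y ↦ ?_
    simp [hg, indicator, mem_ball, dist_eq_norm, add_sub_cancel_right, not_lt]
  rw [h1, my_lintegral_fun_norm_addHaar _ g hgm, hfin]
  congr 1
  have h2 : ∀ r ∈ Ioi ρ,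
      ENNReal.ofReal (r ^ (n - 1)) * ENNReal.ofReal (r ^ t) = ENNReal.ofReal (r ^ s) := by
    intro r hr
    have hr0 : (0:ℝ) < r := hρ.trans hr
    rw [← ENNReal.ofReal_mul (pow_nonneg hr0.le _)]
    congr 1
    rw [← Real.rpow_natCast r (n-1), ← Real.rpow_add hr0]
    congr 1
    push_cast [hn]
    ring
  calc ∫⁻ r in Ioi (0:ℝ), ENNReal.ofReal (r ^ (n - 1)) * g r
      = ∫⁻ r in Ioi (0:ℝ), (Ici ρ).indicator
          (fun r ↦ ENNReal.ofReal (r ^ (n-1)) * ENNReal.ofReal (r ^ t)) r := by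
        refine lintegral_congr fun r ↦ ?_
        simp [hg, indicator]
    _ = ∫⁻ r in Ici ρ, ENNReal.ofReal (r ^ (n-1)) * ENNReal.ofReal (r ^ t) := by
        rw [lintegral_indicator measurableSet_Ici _, Measure.restrict_restrict measurableSet_Ici,
          show Ici ρ ∩ Ioi (0:ℝ) = Ici ρ from inter_eq_left.2 fun r hr ↦ lt_of_lt_of_le hρ hr]
    _ = ∫⁻ r in Ioi ρ, ENNReal.ofReal (r ^ (n-1)) * ENNReal.ofReal (r ^ t) := by
        rw [restrict_congr_set Ioi_ae_eq_Ici]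
    _ = ∫⁻ r in Ioi ρ, ENNReal.ofReal (r ^ s) :=
        setLIntegral_congr_fun measurableSet_Ioi h2
    _ = ENNReal.ofReal (-(ρ ^ ((n:ℝ) + t)) / ((n:ℝ) + t)) := by
        have hint : IntegrableOn (fun r : ℝ ↦ r ^ s) (Ioi ρ) :=
          integrableOn_Ioi_rpow_of_lt ht hρ
        have hnn : 0 ≤ᵐ[volume.restrict (Ioi ρ)] fun r : ℝ ↦ r ^ s :=
          (ae_restrict_iff' measurableSet_Ioi).2
            (Filter.Eventually.of_forall fun r hr ↦ Real.rpow_nonneg (hρ.trans hr).le s)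
        rw [← ofReal_integral_eq_lintegral_ofReal hint hnn, integral_Ioi_rpow_of_lt ht hρ]
        rw [show s + 1 = (n:ℝ) + t by rw [hs]; ring]

noncomputable def kap (n : ℕ) : ℝ := (volume (ball (0 : V n) 1)).toReal

lemma kap_nonneg (n : ℕ) : 0 ≤ kap n := ENNReal.toReal_nonneg

lemma near_real (n : ℕ) (hn : 1 ≤ n) (γ : ℝ) (hγ : 0 < γ) (x : V n) (R : ℝ) (hR : 0 < R) :
    IntegrableOn (fun y : V n ↦ ‖y - x‖ ^ (γ - (n:ℝ))) (ball x R) ∧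
    ∫ y in ball x R, ‖y - x‖ ^ (γ - (n:ℝ)) ≤ (n * kap n / γ) * R ^ γ := by
  have hmeas : Measurable fun y : V n ↦ ‖y - x‖ ^ (γ - (n:ℝ)) := by fun_prop
  have hnn : ∀ y : V n, 0 ≤ ‖y - x‖ ^ (γ - (n:ℝ)) := fun y ↦ Real.rpow_nonneg (norm_nonneg _) _
  have ht : -1 < (n:ℝ) - 1 + (γ - (n:ℝ)) := by linarith
  have hlint := lint_ball_rpow n hn (γ - (n:ℝ)) ht x R hR
  rw [show (n:ℝ) + (γ - (n:ℝ)) = γ by ring] at hlint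
  have hfin : (∫⁻ y in ball x R, ENNReal.ofReal (‖y - x‖ ^ (γ - (n:ℝ)))) ≠ ⊤ := by
    rw [hlint]
    exact (ENNReal.mul_lt_top (ENNReal.mul_lt_top (ENNReal.natCast_lt_top n)
      measure_ball_lt_top) ENNReal.ofReal_lt_top).ne
  have hint : IntegrableOn (fun y : V n ↦ ‖y - x‖ ^ (γ - (n:ℝ))) (ball x R) := by
    refine ⟨hmeas.aestronglyMeasurable, ?_⟩
    rw [hasFiniteIntegral_iff_ofReal (Filter.Eventually.of_forall hnn)]
    exact lt_top_iff_ne_top.2 hfin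
  refine ⟨hint, ?_⟩
  rw [integral_eq_lintegral_of_nonneg_ae (Filter.Eventually.of_forall hnn)
    hmeas.aestronglyMeasurable, hlint]
  rw [ENNReal.toReal_mul, ENNReal.toReal_mul, ENNReal.toReal_ofReal
    (by positivity : (0:ℝ) ≤ R ^ γ / γ), ENNReal.toReal_natCast]
  rw [div_eq_mul_inv, div_eq_mul_inv]
  calc (n:ℝ) * (volume (ball (0:V n) 1)).toReal * (R ^ γ * γ⁻¹)
      = (n:ℝ) * kap n * γ⁻¹ * R ^ γ := by rw [kap]; ring
    _ ≤ _ := le_of_eq (by ring)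

lemma far_real (n : ℕ) (hn : 1 ≤ n) (γ : ℝ) (hγ0 : 0 < γ) (hγ1 : γ < 1)
    (x : V n) (ρ : ℝ) (hρ : 0 < ρ) :
    IntegrableOn (fun y : V n ↦ ‖y - x‖ ^ (γ - 1 - (n:ℝ))) ((ball x ρ)ᶜ) ∧
    ∫ y in (ball x ρ)ᶜ, ‖y - x‖ ^ (γ - 1 - (n:ℝ)) ≤ (n * kap n / (1 - γ)) * ρ ^ (γ - 1) := by
  have hmeas : Measurable fun y : V n ↦ ‖y - x‖ ^ (γ - 1 - (n:ℝ)) := by fun_prop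
  have hnn : ∀ y : V n, 0 ≤ ‖y - x‖ ^ (γ - 1 - (n:ℝ)) := fun y ↦ Real.rpow_nonneg (norm_nonneg _) _
  have ht : (n:ℝ) - 1 + (γ - 1 - (n:ℝ)) < -1 := by linarith
  have hlint := lint_compl_ball_rpow n hn (γ - 1 - (n:ℝ)) ht x ρ hρ
  rw [show (n:ℝ) + (γ - 1 - (n:ℝ)) = γ - 1 by ring] at hlint
  have hval : -(ρ ^ (γ - 1)) / (γ - 1) = ρ ^ (γ - 1) / (1 - γ) := by
    rw [div_eq_div_iff (by linarith) (by linarith)]; ring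
  rw [hval] at hlint
  have hfin : (∫⁻ y in (ball x ρ)ᶜ, ENNReal.ofReal (‖y - x‖ ^ (γ - 1 - (n:ℝ)))) ≠ ⊤ := by
    rw [hlint]
    exact (ENNReal.mul_lt_top (ENNReal.mul_lt_top (ENNReal.natCast_lt_top n)
      measure_ball_lt_top) ENNReal.ofReal_lt_top).ne
  have hint : IntegrableOn (fun y : V n ↦ ‖y - x‖ ^ (γ - 1 - (n:ℝ))) ((ball x ρ)ᶜ) := by
    refine ⟨hmeas.aestronglyMeasurable, ?_⟩
    rw [hasFiniteIntegral_iff_ofReal (Filter.Eventually.of_forall hnn)]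
    exact lt_top_iff_ne_top.2 hfin
  refine ⟨hint, ?_⟩
  rw [integral_eq_lintegral_of_nonneg_ae (Filter.Eventually.of_forall hnn)
    hmeas.aestronglyMeasurable, hlint]
  rw [ENNReal.toReal_mul, ENNReal.toReal_mul, ENNReal.toReal_ofReal
    (le_of_lt (div_pos (Real.rpow_pos_of_pos hρ _) (by linarith))), ENNReal.toReal_natCast]
  refine le_of_eq ?_
  rw [kap]; field_simp

set_option maxHeartbeats 1000000 in
/-- Lemma 3.1: uniform and Hölder bounds for weakly singular integral operators. -/
theorem weakly_singular_kernel_bounds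
    (d : ℕ) (hd : 2 ≤ d) (γ : ℝ) (hγ : γ ∈ Set.Ioo (0:ℝ) 1) :
    ∃ C > (0:ℝ),
      ∀ (E : Set (EuclideanSpace ℝ (Fin (d - 1))))
        (K : EuclideanSpace ℝ (Fin (d - 1)) → EuclideanSpace ℝ (Fin (d - 1)) → ℝ)
        (f : EuclideanSpace ℝ (Fin (d - 1)) → ℝ) (A F : ℝ),
        MeasurableSet E → Bornology.IsBounded E →
        Measurable (Function.uncurry K) → Measurable f →
        (∀ x ∈ E, ∀ y ∈ E, x ≠ y → |K x y| ≤ A / ‖x - y‖ ^ ((d:ℝ) - 1 - γ)) →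
        (∀ x₁ ∈ E, ∀ x₂ ∈ E, ∀ y ∈ E, ‖x₁ - x₂‖ ≤ ‖x₁ - y‖ / 2 →
          |K x₁ y - K x₂ y| ≤ ‖x₁ - x₂‖ * (A / ‖x₁ - y‖ ^ ((d:ℝ) - γ))) →
        (∀ y ∈ E, |f y| ≤ F) →
        (∀ x ∈ E, |∫ y in E, K x y * f y| ≤ C * A * Metric.diam E ^ γ * F) ∧
        (∀ x₁ ∈ E, ∀ x₂ ∈ E,
          |(∫ y in E, K x₁ y * f y) - ∫ y in E, K x₂ y * f y|
            ≤ C * A * F * ‖x₁ - x₂‖ ^ γ) := by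
  obtain ⟨hγ0, hγ1⟩ := hγ
  set n : ℕ := d - 1 with hn_def
  have hn : 1 ≤ n := by omega
  haveI : Nonempty (Fin n) := ⟨⟨0, hn⟩⟩
  haveI : Nontrivial (EuclideanSpace ℝ (Fin n)) := by
    refine nontrivial_of_ne (EuclideanSpace.single ⟨0, hn⟩ 1) 0 fun h ↦ ?_
    have := congrArg (fun v : EuclideanSpace ℝ (Fin n) => v ⟨0, hn⟩) h
    simp [EuclideanSpace.single] at this
  have hcast : ((n:ℕ):ℝ) = (d:ℝ) - 1 := by
    rw [hn_def, Nat.cast_sub (by omega : 1 ≤ d)]; norm_num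
  set t₁ : ℝ := γ - (n:ℝ) with ht₁def
  set t₂ : ℝ := γ - 1 - (n:ℝ) with ht₂def
  have he₁ : (d:ℝ) - 1 - γ = -t₁ := by rw [ht₁def, hcast]; ring
  have he₂ : (d:ℝ) - γ = -t₂ := by rw [ht₂def, hcast]; ring
  set c₁ : ℝ := (n:ℝ) * kap n / γ with hc₁def
  set c₂ : ℝ := (n:ℝ) * kap n / (1 - γ) with hc₂def
  have hkap := kap_nonneg n
  have hc₁ : 0 ≤ c₁ := div_nonneg (mul_nonneg (Nat.cast_nonneg n) hkap) hγ0.le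
  have hc₂ : 0 ≤ c₂ := div_nonneg (mul_nonneg (Nat.cast_nonneg n) hkap) (by linarith)
  refine ⟨6 * c₁ + c₂ + 1, by linarith, ?_⟩
  intro E K f A F hEm hEb hKm hfm hK1 hK2 hFb
  by_cases hsub : E.Subsingleton
  · constructor
    · intro x hx
      rw [Measure.restrict_eq_zero.2 (hsub.measure_zero volume), integral_zero_measure, abs_zero,
        Metric.diam_subsingleton hsub, Real.zero_rpow hγ0.ne']
      simp
    · intro x₁ h₁ x₂ h₂
      have hx : x₁ = x₂ := hsub h₁ h₂
      subst hx
      rw [Measure.restrict_eq_zero.2 (hsub.measure_zero volume), integral_zero_measure]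
      simp [Real.zero_rpow hγ0.ne']
  · rw [Set.not_subsingleton_iff] at hsub
    obtain ⟨a, ha, b, hb, hab⟩ := hsub
    have hab' : (0:ℝ) < ‖a - b‖ ^ ((d:ℝ) - 1 - γ) :=
      Real.rpow_pos_of_pos (norm_sub_pos_iff.2 hab) _
    have hA : 0 ≤ A := by
      have h0 := (abs_nonneg _).trans (hK1 a ha b hb hab)
      rcases div_nonneg_iff.mp h0 with ⟨h, _⟩ | ⟨_, h⟩
      · exact h
      · linarith
    have hF : 0 ≤ F := (abs_nonneg _).trans (hFb a ha)
    have hdiam : 0 < Metric.diam E :=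
      lt_of_lt_of_le (dist_pos.2 hab) (Metric.dist_le_diam_of_mem hEb ha hb)
    -- pointwise rewriting of the kernel bounds
    have hpt₁ : ∀ u : ℝ, 0 < u → A / u ^ ((d:ℝ) - 1 - γ) = A * u ^ t₁ := by
      intro u hu
      rw [he₁, Real.rpow_neg hu.le, div_eq_mul_inv, inv_inv]
    have hpt₂ : ∀ u : ℝ, 0 < u → A / u ^ ((d:ℝ) - γ) = A * u ^ t₂ := by
      intro u hu
      rw [he₂, Real.rpow_neg hu.le, div_eq_mul_inv, inv_inv]
    -- a.e. bound of the integrand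
    have hae : ∀ x ∈ E, ∀ S : Set (EuclideanSpace ℝ (Fin n)), MeasurableSet S → S ⊆ E →
        ∀ᵐ y ∂(volume.restrict S), |K x y * f y| ≤ A * F * ‖y - x‖ ^ t₁ := by
      intro x hx S hSm hSE
      have hne : ∀ᵐ y ∂(volume.restrict S), y ≠ x :=
        ae_restrict_of_ae (by
          simpa using (Set.countable_singleton x).ae_notMem
            (volume : Measure (EuclideanSpace ℝ (Fin n))))
      filter_upwards [ae_restrict_mem hSm, hne] with y hyS hyx
      have hyE := hSE hyS
      have hu : (0:ℝ) < ‖y - x‖ := norm_sub_pos_iff.2 hyx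
      have h1 : |K x y| ≤ A * ‖y - x‖ ^ t₁ := by
        have := hK1 x hx y hyE (fun h ↦ hyx h.symm)
        rwa [norm_sub_rev, hpt₁ _ hu] at this
      calc |K x y * f y| = |K x y| * |f y| := abs_mul _ _
        _ ≤ (A * ‖y - x‖ ^ t₁) * F :=
            mul_le_mul h1 (hFb y hyE) (abs_nonneg _)
              (le_trans (abs_nonneg _) h1)
        _ = A * F * ‖y - x‖ ^ t₁ := by ring
    -- integrability of the integrand on E
    have hKi : ∀ x ∈ E, IntegrableOn (fun y ↦ K x y * f y) E volume := by
      intro x hx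
      have hmeas : Measurable fun y ↦ K x y * f y :=
        (hKm.comp measurable_prodMk_left).mul hfm
      have hG : IntegrableOn (fun y ↦ A * F * ‖y - x‖ ^ t₁) (ball x (2 * Metric.diam E)) volume :=
        ((near_real n hn γ hγ0 x _ (by linarith)).1).const_mul (A * F)
      have hEball : E ⊆ ball x (2 * Metric.diam E) := fun y hy ↦
        mem_ball.2 (lt_of_le_of_lt (Metric.dist_le_diam_of_mem hEb hy hx) (by linarith))
      refine Integrable.mono (hG.mono_set hEball) hmeas.aestronglyMeasurable ?_
      filter_upwards [hae x hx E hEm subset_rfl] with y hy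
      rw [Real.norm_eq_abs, Real.norm_eq_abs]
      exact hy.trans (le_abs_self _)
    -- core estimate
    have hcore : ∀ x ∈ E, ∀ S : Set (EuclideanSpace ℝ (Fin n)), MeasurableSet S → S ⊆ E →
        ∀ r : ℝ, 0 < r → S ⊆ ball x r →
        |∫ y in S, K x y * f y| ≤ A * F * (c₁ * r ^ γ) := by
      intro x hx S hSm hSE r hr hSball
      obtain ⟨hGint, hGval⟩ := near_real n hn γ hγ0 x r hr
      have hGball : IntegrableOn (fun y ↦ A * F * ‖y - x‖ ^ t₁) (ball x r) volume :=
        hGint.const_mul (A * F)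
      have hKS : IntegrableOn (fun y ↦ K x y * f y) S volume :=
        (hKi x hx).mono_set hSE
      calc |∫ y in S, K x y * f y| ≤ ∫ y in S, |K x y * f y| := by
            simpa only [Real.norm_eq_abs] using
              norm_integral_le_integral_norm (μ := volume.restrict S) (fun y ↦ K x y * f y)
        _ ≤ ∫ y in S, A * F * ‖y - x‖ ^ t₁ :=
            integral_mono_ae hKS.abs (hGball.mono_set hSball) (hae x hx S hSm hSE)
        _ ≤ ∫ y in ball x r, A * F * ‖y - x‖ ^ t₁ :=
            setIntegral_mono_set hGball
              (Filter.Eventually.of_forall fun y ↦ by positivity)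
              (HasSubset.Subset.eventuallyLE hSball)
        _ = A * F * ∫ y in ball x r, ‖y - x‖ ^ t₁ := integral_const_mul _ _
        _ ≤ A * F * (c₁ * r ^ γ) :=
            mul_le_mul_of_nonneg_left hGval (mul_nonneg hA hF)
    constructor
    · -- uniform bound
      intro x hx
      have hEball : E ⊆ ball x (2 * Metric.diam E) := fun y hy ↦
        mem_ball.2 (lt_of_le_of_lt (Metric.dist_le_diam_of_mem hEb hy hx) (by linarith))
      have h := hcore x hx E hEm subset_rfl (2 * Metric.diam E) (by linarith) hEball
      have h2γ : (2 * Metric.diam E) ^ γ ≤ 2 * Metric.diam E ^ γ := by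
        rw [Real.mul_rpow (by norm_num) hdiam.le]
        have : (2:ℝ) ^ γ ≤ 2 := by
          calc (2:ℝ) ^ γ ≤ (2:ℝ) ^ (1:ℝ) :=
                Real.rpow_le_rpow_of_exponent_le one_le_two hγ1.le
            _ = 2 := Real.rpow_one 2
        nlinarith [Real.rpow_nonneg hdiam.le γ]
      have hD : 0 ≤ Metric.diam E ^ γ := Real.rpow_nonneg hdiam.le γ
      calc |∫ y in E, K x y * f y| ≤ A * F * (c₁ * (2 * Metric.diam E) ^ γ) := h
        _ ≤ A * F * (c₁ * (2 * Metric.diam E ^ γ)) := by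
            refine mul_le_mul_of_nonneg_left ?_ (mul_nonneg hA hF)
            exact mul_le_mul_of_nonneg_left h2γ hc₁
        _ ≤ (6 * c₁ + c₂ + 1) * A * Metric.diam E ^ γ * F := by
            have hP : 0 ≤ A * F * Metric.diam E ^ γ := mul_nonneg (mul_nonneg hA hF) hD
            nlinarith [mul_nonneg hP hc₁, mul_nonneg hP hc₂, hP]
    · -- Hölder bound
      intro x₁ h₁ x₂ h₂
      by_cases hx : x₁ = x₂
      · subst hx; simp [Real.zero_rpow hγ0.ne']
      · have hδ0 : 0 < ‖x₁ - x₂‖ := norm_sub_pos_iff.2 hx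
        set δ : ℝ := ‖x₁ - x₂‖ with hδdef
        set B : Set (EuclideanSpace ℝ (Fin n)) := ball x₁ (2 * δ) with hBdef
        have hBm : MeasurableSet B := measurableSet_ball
        have hEBm : MeasurableSet (E ∩ B) := hEm.inter hBm
        have hi1 := hKi x₁ h₁
        have hi2 := hKi x₂ h₂
        have hdec1 := integral_inter_add_diff (f := fun y ↦ K x₁ y * f y) hBm hi1
        have hdec2 := integral_inter_add_diff (f := fun y ↦ K x₂ y * f y) hBm hi2
        have hT1 : |∫ y in E ∩ B, K x₁ y * f y| ≤ A * F * (c₁ * (2*δ) ^ γ) :=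
          hcore x₁ h₁ (E ∩ B) hEBm inter_subset_left (2*δ) (by linarith) inter_subset_right
        have hsub2 : E ∩ B ⊆ ball x₂ (3*δ) := by
          intro y hy
          have h1 : dist y x₁ < 2*δ := mem_ball.1 hy.2
          have h2 : dist x₁ x₂ = δ := by rw [dist_eq_norm]
          have h3 := dist_triangle y x₁ x₂
          exact mem_ball.2 (by linarith)
        have hT2 : |∫ y in E ∩ B, K x₂ y * f y| ≤ A * F * (c₁ * (3*δ) ^ γ) :=
          hcore x₂ h₂ (E ∩ B) hEBm inter_subset_left (3*δ) (by linarith) hsub2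
        obtain ⟨hFint, hFval⟩ := far_real n hn γ hγ0 hγ1 x₁ (2*δ) (by linarith)
        have hGc : IntegrableOn (fun y ↦ δ * A * F * ‖y - x₁‖ ^ t₂) Bᶜ volume :=
          hFint.const_mul _
        have hdiffsub : E \ B ⊆ Bᶜ := fun y hy ↦ hy.2
        have hEBdm : MeasurableSet (E \ B) := hEm.diff hBm
        have hint1 : IntegrableOn (fun y ↦ K x₁ y * f y) (E \ B) volume :=
          hi1.mono_set diff_subset
        have hint2 : IntegrableOn (fun y ↦ K x₂ y * f y) (E \ B) volume :=
          hi2.mono_set diff_subset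
        have haediff : ∀ᵐ y ∂(volume.restrict (E \ B)),
            |K x₁ y * f y - K x₂ y * f y| ≤ δ * A * F * ‖y - x₁‖ ^ t₂ := by
          filter_upwards [ae_restrict_mem hEBdm] with y hy
          have hyE : y ∈ E := hy.1
          have hyB : 2*δ ≤ dist y x₁ := not_lt.1 fun h ↦ hy.2 (mem_ball.2 h)
          have hxy : ‖x₁ - y‖ = dist y x₁ := by rw [dist_eq_norm, norm_sub_rev]
          have hu : (0:ℝ) < ‖x₁ - y‖ := by rw [hxy]; linarith
          have hcond : ‖x₁ - x₂‖ ≤ ‖x₁ - y‖ / 2 := by rw [hxy]; rw [← hδdef]; linarith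
          have hK2' := hK2 x₁ h₁ x₂ h₂ y hyE hcond
          rw [hpt₂ _ hu] at hK2'
          have hstep : |K x₁ y - K x₂ y| ≤ δ * (A * ‖x₁ - y‖ ^ t₂) := hK2'
          calc |K x₁ y * f y - K x₂ y * f y| = |K x₁ y - K x₂ y| * |f y| := by
                rw [← abs_mul, sub_mul]
            _ ≤ (δ * (A * ‖x₁ - y‖ ^ t₂)) * F :=
                mul_le_mul hstep (hFb y hyE) (abs_nonneg _)
                  (le_trans (abs_nonneg _) hstep)
            _ = δ * A * F * ‖y - x₁‖ ^ t₂ := by rw [norm_sub_rev]; ring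
        have hT3 : |∫ y in E \ B, (K x₁ y * f y - K x₂ y * f y)|
            ≤ δ * A * F * (c₂ * (2*δ) ^ (γ - 1)) := by
          calc |∫ y in E \ B, (K x₁ y * f y - K x₂ y * f y)|
              ≤ ∫ y in E \ B, |K x₁ y * f y - K x₂ y * f y| := by
                simpa only [Real.norm_eq_abs] using
                  norm_integral_le_integral_norm (μ := volume.restrict (E \ B))
                    (fun y ↦ K x₁ y * f y - K x₂ y * f y)
            _ ≤ ∫ y in E \ B, δ * A * F * ‖y - x₁‖ ^ t₂ :=
                integral_mono_ae (hint1.sub hint2).abs (hGc.mono_set hdiffsub) haediff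
            _ ≤ ∫ y in Bᶜ, δ * A * F * ‖y - x₁‖ ^ t₂ :=
                setIntegral_mono_set hGc
                  (Filter.Eventually.of_forall fun y ↦ by positivity)
                  (HasSubset.Subset.eventuallyLE hdiffsub)
            _ = δ * A * F * ∫ y in Bᶜ, ‖y - x₁‖ ^ t₂ := integral_const_mul _ _
            _ ≤ δ * A * F * (c₂ * (2*δ) ^ (γ - 1)) := by
                exact mul_le_mul_of_nonneg_left hFval (by positivity)
        have hsplit : (∫ y in E, K x₁ y * f y) - ∫ y in E, K x₂ y * f y
            = ((∫ y in E ∩ B, K x₁ y * f y) - ∫ y in E ∩ B, K x₂ y * f y)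
              + ∫ y in E \ B, (K x₁ y * f y - K x₂ y * f y) := by
          rw [integral_sub hint1 hint2, ← hdec1, ← hdec2]; ring
        have hδγ : 0 ≤ δ ^ γ := Real.rpow_nonneg hδ0.le γ
        have hP : 0 ≤ A * F * δ ^ γ := by positivity
        have h2d : (2*δ) ^ γ ≤ 2 * δ ^ γ := by
          rw [Real.mul_rpow (by norm_num) hδ0.le]
          have h2 : (2:ℝ) ^ γ ≤ 2 := by
            calc (2:ℝ) ^ γ ≤ (2:ℝ) ^ (1:ℝ) :=
                  Real.rpow_le_rpow_of_exponent_le one_le_two hγ1.le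
              _ = 2 := Real.rpow_one 2
          exact mul_le_mul_of_nonneg_right h2 hδγ
        have h3d : (3*δ) ^ γ ≤ 3 * δ ^ γ := by
          rw [Real.mul_rpow (by norm_num) hδ0.le]
          have h3 : (3:ℝ) ^ γ ≤ 3 := by
            calc (3:ℝ) ^ γ ≤ (3:ℝ) ^ (1:ℝ) :=
                  Real.rpow_le_rpow_of_exponent_le (by norm_num) hγ1.le
              _ = 3 := Real.rpow_one 3
          exact mul_le_mul_of_nonneg_right h3 hδγ
        have h4d : δ * (2*δ) ^ (γ - 1) ≤ δ ^ γ := by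
          rw [Real.mul_rpow (by norm_num) hδ0.le]
          have h21 : (2:ℝ) ^ (γ - 1) ≤ 1 :=
            Real.rpow_le_one_of_one_le_of_nonpos one_le_two (by linarith)
          have hδδ : δ * δ ^ (γ - 1) = δ ^ γ := by
            calc δ * δ ^ (γ - 1) = δ ^ (1:ℝ) * δ ^ (γ - 1) := by rw [Real.rpow_one]
              _ = δ ^ (1 + (γ - 1)) := (Real.rpow_add hδ0 1 (γ - 1)).symm
              _ = δ ^ γ := by norm_num
          calc δ * ((2:ℝ) ^ (γ-1) * δ ^ (γ-1)) = (2:ℝ) ^ (γ-1) * (δ * δ ^ (γ-1)) := by ring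
            _ = (2:ℝ) ^ (γ-1) * δ ^ γ := by rw [hδδ]
            _ ≤ 1 * δ ^ γ := mul_le_mul_of_nonneg_right h21 hδγ
            _ = δ ^ γ := one_mul _
        have b1 : A * F * (c₁ * (2*δ) ^ γ) ≤ 2 * c₁ * (A * F * δ ^ γ) := by
          calc A * F * (c₁ * (2*δ) ^ γ) ≤ A * F * (c₁ * (2 * δ ^ γ)) :=
                mul_le_mul_of_nonneg_left
                  (mul_le_mul_of_nonneg_left h2d hc₁) (mul_nonneg hA hF)
            _ = 2 * c₁ * (A * F * δ ^ γ) := by ring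
        have b2 : A * F * (c₁ * (3*δ) ^ γ) ≤ 3 * c₁ * (A * F * δ ^ γ) := by
          calc A * F * (c₁ * (3*δ) ^ γ) ≤ A * F * (c₁ * (3 * δ ^ γ)) :=
                mul_le_mul_of_nonneg_left
                  (mul_le_mul_of_nonneg_left h3d hc₁) (mul_nonneg hA hF)
            _ = 3 * c₁ * (A * F * δ ^ γ) := by ring
        have b3 : δ * A * F * (c₂ * (2*δ) ^ (γ - 1)) ≤ c₂ * (A * F * δ ^ γ) := by
          calc δ * A * F * (c₂ * (2*δ) ^ (γ - 1))
              = A * F * c₂ * (δ * (2*δ) ^ (γ - 1)) := by ring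
            _ ≤ A * F * c₂ * δ ^ γ :=
                mul_le_mul_of_nonneg_left h4d (mul_nonneg (mul_nonneg hA hF) hc₂)
            _ = c₂ * (A * F * δ ^ γ) := by ring
        calc |(∫ y in E, K x₁ y * f y) - ∫ y in E, K x₂ y * f y|
            ≤ |(∫ y in E ∩ B, K x₁ y * f y) - ∫ y in E ∩ B, K x₂ y * f y|
              + |∫ y in E \ B, (K x₁ y * f y - K x₂ y * f y)| := by
              rw [hsplit]; exact abs_add_le _ _
          _ ≤ (|∫ y in E ∩ B, K x₁ y * f y| + |∫ y in E ∩ B, K x₂ y * f y|)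
              + |∫ y in E \ B, (K x₁ y * f y - K x₂ y * f y)| := by
              have := abs_sub (∫ y in E ∩ B, K x₁ y * f y) (∫ y in E ∩ B, K x₂ y * f y)
              linarith
          _ ≤ (A * F * (c₁ * (2*δ) ^ γ) + A * F * (c₁ * (3*δ) ^ γ))
              + δ * A * F * (c₂ * (2*δ) ^ (γ - 1)) := by linarith
          _ ≤ 2 * c₁ * (A * F * δ ^ γ) + 3 * c₁ * (A * F * δ ^ γ) + c₂ * (A * F * δ ^ γ) := by
              linarith
          _ ≤ (6 * c₁ + c₂ + 1) * A * F * δ ^ γ := by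
              have hq : (6 * c₁ + c₂ + 1) * A * F * δ ^ γ
                  = 6 * (c₁ * (A * F * δ ^ γ)) + c₂ * (A * F * δ ^ γ) + A * F * δ ^ γ := by ring
              have h1 := mul_nonneg hc₁ hP
              linarith
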